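/- With normalized product kernels K_S as above and centered kernels defined recursively by K_S^c = K_S − ∑_{R ⊊ S} K_R^c (K_∅^c = 1), for every nonempty S and every i ∈ S, the integral of t_i ↦ K_S^c(x_S, t_S) over T_i with respect to μ_i is identically zero (partial zero-mean property). -/
import Mathlib


open MeasureTheory

private lemma auxA {d : ℕ} {T : Fin d → Type*}
    (k : ∀ i, T i → T i → ℝ)
    (Kc : Finset (Fin d) → (∀ j, T j) → (∀ j, T j) → ℝ)
    (hKc : ∀ S x t, Kc S x t
      = (∏ j ∈ S, k j (x j) (t j)) - ∑ R ∈ S.ssubsets, Kc R x t)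
    (i : Fin d) (x t : ∀ j, T j) (ti : T i) :
    ∀ R : Finset (Fin d), i ∉ R → Kc R x (Function.update t i ti) = Kc R x t := by
  intro R
  induction R using Finset.strongInduction with
  | _ R IH =>
    intro hi
    rw [hKc, hKc]
    congr 1
    · refine Finset.prod_congr rfl fun j hj => ?_
      rw [Function.update_of_ne (by rintro rfl; exact hi hj)]
    · refine Finset.sum_congr rfl fun R' hR' => ?_
      have hss := Finset.mem_ssubsets.mp hR'
      exact IH R' hss (fun h => hi (hss.subset h))

private lemma auxB {d : ℕ} {T : Fin d → Type*}
    (k : ∀ i, T i → T i → ℝ)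
    (Kc : Finset (Fin d) → (∀ j, T j) → (∀ j, T j) → ℝ)
    (hKc : ∀ S x t, Kc S x t
      = (∏ j ∈ S, k j (x j) (t j)) - ∑ R ∈ S.ssubsets, Kc R x t)
    (x t : ∀ j, T j) (A : Finset (Fin d)) :
    ∑ R ∈ A.powerset, Kc R x t = ∏ j ∈ A, k j (x j) (t j) := by
  have h1 : ∑ R ∈ A.powerset.erase A, Kc R x t + Kc A x t
      = ∑ R ∈ A.powerset, Kc R x t :=
    Finset.sum_erase_add _ _ (Finset.mem_powerset_self A)
  have h2 : Kc A x t = (∏ j ∈ A, k j (x j) (t j)) - ∑ R ∈ A.ssubsets, Kc R x t := hKc A x t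
  have h3 : A.ssubsets = A.powerset.erase A := rfl
  rw [h3] at h2
  linarith [h1, h2]

theorem stmt3 (d : ℕ) (T : Fin d → Type*) [∀ i, MeasurableSpace (T i)]
    (μ : ∀ i, Measure (T i)) [∀ i, IsProbabilityMeasure (μ i)]
    (k : ∀ i, T i → T i → ℝ)
    (hmeas : ∀ i, Measurable (Function.uncurry (k i)))
    (hbdd : ∀ i, ∃ M, ∀ a b, |k i a b| ≤ M)
    (hnorm : ∀ i (xi : T i), ∫ ti, k i xi ti ∂(μ i) = 1)
    (Kc : Finset (Fin d) → (∀ j, T j) → (∀ j, T j) → ℝ)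
    (hKc : ∀ S x t, Kc S x t
      = (∏ j ∈ S, k j (x j) (t j)) - ∑ R ∈ S.ssubsets, Kc R x t) :
    ∀ S : Finset (Fin d), S.Nonempty → ∀ i ∈ S, ∀ x t : ∀ j, T j,
      ∫ ti, Kc S x (Function.update t i ti) ∂(μ i) = 0 := by
  intro S
  induction S using Finset.strongInduction with
  | _ S IH =>
    intro hS i hi x t
    obtain ⟨M, hM⟩ := hbdd i
    have meask : Measurable (k i (x i)) := (hmeas i).of_uncurry_left
    have intk : Integrable (fun ti => k i (x i) ti) (μ i) := by
      refine ⟨meask.aestronglyMeasurable, ?_⟩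
      exact HasFiniteIntegral.of_bounded (C := M)
        (ae_of_all _ fun a => by simpa [Real.norm_eq_abs] using hM (x i) a)
    -- integrability of the product term for any A
    have intProd : ∀ A : Finset (Fin d),
        Integrable (fun ti => ∏ j ∈ A, k j (x j) (Function.update t i ti j)) (μ i) := by
      intro A
      by_cases hiA : i ∈ A
      · have : (fun ti => ∏ j ∈ A, k j (x j) (Function.update t i ti j))
            = fun ti => k i (x i) ti * ∏ j ∈ A.erase i, k j (x j) (t j) := by
          funext ti
          rw [← Finset.mul_prod_erase A _ hiA, Function.update_self]
          congr 1
          refine Finset.prod_congr rfl fun j hj => ?_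
          rw [Function.update_of_ne (Finset.ne_of_mem_erase hj)]
        rw [this]
        exact intk.mul_const _
      · have : (fun ti => ∏ j ∈ A, k j (x j) (Function.update t i ti j))
            = fun _ => ∏ j ∈ A, k j (x j) (t j) := by
          funext ti
          refine Finset.prod_congr rfl fun j hj => ?_
          rw [Function.update_of_ne (by rintro rfl; exact hiA hj)]
        rw [this]
        exact integrable_const _
    have intKc : ∀ R : Finset (Fin d),
        Integrable (fun ti => Kc R x (Function.update t i ti)) (μ i) := by
      intro R
      induction R using Finset.strongInduction with
      | _ R IH2 =>
        have : (fun ti => Kc R x (Function.update t i ti))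
            = fun ti => (∏ j ∈ R, k j (x j) (Function.update t i ti j))
              - ∑ R' ∈ R.ssubsets, Kc R' x (Function.update t i ti) := by
          funext ti; exact hKc R x _
        rw [this]
        refine (intProd R).sub ?_
        exact integrable_finset_sum _ fun R' hR' => IH2 R' (Finset.mem_ssubsets.mp hR')
    have h0 : ∫ ti, Kc S x (Function.update t i ti) ∂(μ i)
        = ∫ ti, ((∏ j ∈ S, k j (x j) (Function.update t i ti j))
            - ∑ R ∈ S.ssubsets, Kc R x (Function.update t i ti)) ∂(μ i) := by
      congr 1; funext ti; exact hKc S x _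
    rw [h0, integral_sub (intProd S)
      (integrable_finset_sum _ fun R hR => intKc R),
      integral_finset_sum _ fun R hR => intKc R]
    -- the product integral
    have hprodeq : (fun ti => ∏ j ∈ S, k j (x j) (Function.update t i ti j))
        = fun ti => k i (x i) ti * ∏ j ∈ S.erase i, k j (x j) (t j) := by
      funext ti
      rw [← Finset.mul_prod_erase S _ hi, Function.update_self]
      congr 1
      refine Finset.prod_congr rfl fun j hj => ?_
      rw [Function.update_of_ne (Finset.ne_of_mem_erase hj)]
    have hI1 : ∫ ti, (∏ j ∈ S, k j (x j) (Function.update t i ti j)) ∂(μ i)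
        = ∏ j ∈ S.erase i, k j (x j) (t j) := by
      rw [hprodeq, integral_mul_const, hnorm i (x i), one_mul]
    rw [hI1]
    -- split the sum
    rw [← Finset.sum_filter_add_sum_filter_not S.ssubsets (fun R => i ∈ R)]
    have hz : ∑ R ∈ S.ssubsets.filter (fun R => i ∈ R),
        ∫ ti, Kc R x (Function.update t i ti) ∂(μ i) = 0 := by
      refine Finset.sum_eq_zero fun R hR => ?_
      obtain ⟨hRs, hiR⟩ := Finset.mem_filter.mp hR
      have hss := Finset.mem_ssubsets.mp hRs
      exact IH R hss ⟨i, hiR⟩ i hiR x t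
    have hc : ∑ R ∈ S.ssubsets.filter (fun R => ¬ i ∈ R),
        ∫ ti, Kc R x (Function.update t i ti) ∂(μ i)
        = ∏ j ∈ S.erase i, k j (x j) (t j) := by
      have hfe : S.ssubsets.filter (fun R => ¬ i ∈ R) = (S.erase i).powerset := by
        ext R
        simp only [Finset.mem_filter, Finset.mem_ssubsets, Finset.mem_powerset,
          Finset.subset_erase]
        constructor
        · rintro ⟨hsub, hni⟩; exact ⟨hsub.subset, hni⟩
        · rintro ⟨hsub, hni⟩
          refine ⟨Finset.ssubset_iff_subset_ne.mpr ⟨hsub, ?_⟩, hni⟩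
          rintro rfl; exact hni hi
      have hconst : ∀ R ∈ S.ssubsets.filter (fun R => ¬ i ∈ R),
          ∫ ti, Kc R x (Function.update t i ti) ∂(μ i) = Kc R x t := by
        intro R hR
        obtain ⟨hRs, hni⟩ := Finset.mem_filter.mp hR
        have : (fun ti => Kc R x (Function.update t i ti)) = fun _ => Kc R x t := by
          funext ti; exact auxA k Kc hKc i x t ti R hni
        rw [this, integral_const]
        simp
      rw [Finset.sum_congr rfl hconst, hfe, auxB k Kc hKc x t (S.erase i)]
    rw [hz, hc, zero_add, sub_self]
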